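/- arXiv:2511.17451 — 2 statements merged into one kernel-verified Lean document; each statement's English description precedes it below -/
import Mathlib

section
/- The threshold energy density ℰ(x) := m|ψ^∞(x)|² - W(x)(ψ₁^∞(x)² - ψ₂^∞(x)²) satisfies ℰ(x) = (2m - g(x))ψ₂^∞(x)² + g(x)ψ₁^∞(x)² ≥ (m+ω)ψ₂^∞(x)² + g(x)ψ₁^∞(x)² > 0 for all x ∈ ℝ, and ℰ is integrable and bounded on ℝ. -/
set_option maxHeartbeats 800000

open Real MeasureTheory

lemma tanh_sq_lt_one' (y : ℝ) : Real.tanh y ^ 2 < 1 := by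
  rw [Real.tanh_eq_sinh_div_cosh, div_pow, div_lt_one (by positivity : (0:ℝ) < Real.cosh y ^ 2)]
  nlinarith [Real.cosh_sq_sub_sinh_sq y]

lemma sech_sq_le' (y : ℝ) : 1 - Real.tanh y ^ 2 ≤ 4 * Real.exp (-(2*y)) := by
  have h1 : Real.exp y * Real.exp (-y) = 1 := by rw [← Real.exp_add]; simp
  have h2 : Real.cosh y = (Real.exp y + Real.exp (-y))/2 := Real.cosh_eq y
  have h3 : Real.exp (-(2*y)) = Real.exp (-y) * Real.exp (-y) := by
    rw [← Real.exp_add]; ring_nf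
  have hc : (0:ℝ) < Real.cosh y ^ 2 := by positivity
  have h0 := Real.cosh_sq_sub_sinh_sq y
  have hk : 1 - Real.tanh y ^ 2 = 1 / Real.cosh y ^ 2 := by
    rw [Real.tanh_eq_sinh_div_cosh, div_pow]; field_simp; exact h0
  rw [hk, div_le_iff₀ hc, h3, h2]
  nlinarith [Real.exp_pos (-y), sq_nonneg (Real.exp (-y))]

lemma continuous_tanh' : Continuous Real.tanh := by
  have : Real.tanh = fun x => Real.sinh x / Real.cosh x := funext Real.tanh_eq_sinh_div_cosh
  rw [this]
  exact Real.continuous_sinh.div Real.continuous_cosh (fun x => (Real.cosh_pos x).ne')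

theorem stmt6 (m ω κ ν : ℝ) (hm : 0 < m) (hω1 : 0 < ω) (hω2 : ω < m)
    (hκ : κ = Real.sqrt (m ^ 2 - ω ^ 2)) (hν : ν = (m - ω) / (m + ω))
    (g W ψ1 ψ2 E : ℝ → ℝ)
    (hg : ∀ x, g x = (m - ω) * (1 - Real.tanh (κ * x) ^ 2) / (1 - ν * Real.tanh (κ * x) ^ 2))
    (hW : ∀ x, W x = m - g x)
    (hψ1 : ∀ x, ψ1 x = Real.sqrt ν * Real.tanh (κ * x) / (1 - ν * Real.tanh (κ * x) ^ 2))
    (hψ2 : ∀ x, ψ2 x = -(ν / (1 - ν)) * (1 - Real.tanh (κ * x) ^ 2) / (1 - ν * Real.tanh (κ * x) ^ 2))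
    (hE : ∀ x, E x = m * (ψ1 x ^ 2 + ψ2 x ^ 2) - W x * (ψ1 x ^ 2 - ψ2 x ^ 2)) :
    (∀ x, E x = (2 * m - g x) * ψ2 x ^ 2 + g x * ψ1 x ^ 2 ∧
        (m + ω) * ψ2 x ^ 2 + g x * ψ1 x ^ 2 ≤ E x ∧ 0 < E x) ∧
      Integrable E volume ∧ ∃ C, ∀ x, |E x| ≤ C := by
  have hmw : 0 < m - ω := sub_pos.2 hω2
  have hmw2 : 0 < m + ω := by linarith
  have hν0 : 0 < ν := by rw [hν]; positivity
  have hν1 : ν < 1 := by rw [hν, div_lt_one hmw2]; linarith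
  have h1ν : 0 < 1 - ν := by linarith
  have hκ0 : 0 < κ := by rw [hκ]; apply Real.sqrt_pos.2; nlinarith
  obtain ⟨C0, hC0def⟩ : ∃ C0 : ℝ, C0 = (2*m*ν^2 + (m-ω)*ν)/(1-ν)^5 := ⟨_, rfl⟩
  have hC0 : 0 ≤ C0 := by
    rw [hC0def]
    apply div_nonneg _ (by positivity)
    linarith [mul_pos hmw hν0, mul_pos hm (mul_pos hν0 hν0)]
  -- pointwise facts
  have main : ∀ x, E x = (2 * m - g x) * ψ2 x ^ 2 + g x * ψ1 x ^ 2 ∧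
      (m + ω) * ψ2 x ^ 2 + g x * ψ1 x ^ 2 ≤ E x ∧ 0 < E x ∧
      E x ≤ C0 * (1 - Real.tanh (κ*x)^2) := by
    intro x
    set t := Real.tanh (κ*x) with htdef
    have ht1 : t^2 < 1 := tanh_sq_lt_one' _
    have ht0 : 0 ≤ t^2 := sq_nonneg t
    have hs : 0 < 1 - t^2 := by linarith
    have hdge : 1 - ν ≤ 1 - ν*t^2 := by linarith [mul_le_of_le_one_right hν0.le ht1.le]
    have hd : 0 < 1 - ν*t^2 := by linarith
    have hd1 : 1 - ν*t^2 ≤ 1 := by linarith [mul_nonneg hν0.le ht0]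
    have ha : ψ1 x ^2 = ν * t^2 / (1-ν*t^2)^2 := by
      rw [hψ1, ← htdef, div_pow, mul_pow, Real.sq_sqrt hν0.le]
    have hb : ψ2 x ^2 = (ν/(1-ν))^2 * (1-t^2)^2 / (1-ν*t^2)^2 := by
      rw [hψ2, ← htdef]; field_simp
    have hbpos : 0 < ψ2 x^2 := by rw [hb]; positivity
    have hapos : 0 ≤ ψ1 x^2 := sq_nonneg _
    have hgpos : 0 < g x := by rw [hg, ← htdef]; exact div_pos (mul_pos hmw hs) hd
    have hgle : g x ≤ m - ω := by
      rw [hg, ← htdef, div_le_iff₀ hd]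
      linarith [mul_nonneg (mul_nonneg hmw.le h1ν.le) ht0]
    have hid : E x = (2*m - g x)*ψ2 x^2 + g x * ψ1 x^2 := by rw [hE, hW]; ring
    have hle : (m + ω) * ψ2 x ^ 2 + g x * ψ1 x ^ 2 ≤ E x := by
      rw [hid]; linarith [mul_nonneg (by linarith : (0:ℝ) ≤ m - ω - g x) hbpos.le]
    have hpos : 0 < E x := by
      rw [hid]
      linarith [mul_pos (by linarith : (0:ℝ) < 2*m - g x) hbpos,
        mul_nonneg hgpos.le hapos]
    refine ⟨hid, hle, hpos, ?_⟩
    -- the decay bound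
    have hEx : E x * ((1-ν)^2 * (1-ν*t^2)^3) =
        (2*m*(1-ν*t^2) - (m-ω)*(1-t^2)) * (ν^2*(1-t^2)^2)
          + (m-ω)*ν*(1-t^2)*t^2*(1-ν)^2 := by
      rw [hid, ha, hb, hg, ← htdef]
      have hd' : 1 - ν*t^2 ≠ 0 := hd.ne'
      generalize hD : 1 - ν*t^2 = D at hd' ⊢
      field_simp
    have hden : (0:ℝ) < (1-ν)^2 * (1-ν*t^2)^3 := by positivity
    have hEx' : E x = ((2*m*(1-ν*t^2) - (m-ω)*(1-t^2)) * (ν^2*(1-t^2)^2)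
          + (m-ω)*ν*(1-t^2)*t^2*(1-ν)^2) / ((1-ν)^2 * (1-ν*t^2)^3) :=
      (eq_div_iff hden.ne').mpr hEx
    have hNle : (2*m*(1-ν*t^2) - (m-ω)*(1-t^2)) * (ν^2*(1-t^2)^2)
          + (m-ω)*ν*(1-t^2)*t^2*(1-ν)^2 ≤ (2*m*ν^2 + (m-ω)*ν) * (1-t^2) := by
      have i1 : (0:ℝ) ≤ 1 - (1-t^2)*(1-ν*t^2) := by
        linarith [ht0, mul_nonneg (mul_nonneg hν0.le ht0) hs.le]
      have i2 : (0:ℝ) ≤ 1 - t^2*(1-ν)^2 := by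
        have i2' : (1-ν)^2 ≤ 1 := pow_le_one₀ h1ν.le (by linarith)
        linarith [mul_le_of_le_one_right ht0 i2', ht1.le]
      have k1 : (0:ℝ) ≤ 2*m*ν^2*(1-t^2) * (1 - (1-t^2)*(1-ν*t^2)) :=
        mul_nonneg (by positivity) i1
      have k2 : (0:ℝ) ≤ (m-ω)*ν*(1-t^2) * (1 - t^2*(1-ν)^2) :=
        mul_nonneg (mul_nonneg (mul_nonneg hmw.le hν0.le) hs.le) i2
      have k3 : (0:ℝ) ≤ (m-ω)*ν^2*(1-t^2)^3 :=
        mul_nonneg (mul_nonneg hmw.le (sq_nonneg ν)) (by positivity)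
      have key : (2*m*ν^2 + (m-ω)*ν) * (1-t^2)
            - ((2*m*(1-ν*t^2) - (m-ω)*(1-t^2)) * (ν^2*(1-t^2)^2)
              + (m-ω)*ν*(1-t^2)*t^2*(1-ν)^2)
          = 2*m*ν^2*(1-t^2) * (1 - (1-t^2)*(1-ν*t^2))
            + (m-ω)*ν*(1-t^2) * (1 - t^2*(1-ν)^2)
            + (m-ω)*ν^2*(1-t^2)^3 := by ring
      linarith [k1, k2, k3, key]
    have hdd : (1-ν)^5 ≤ (1-ν)^2 * (1-ν*t^2)^3 := by
      have h3 : (1-ν)^3 ≤ (1-ν*t^2)^3 := pow_le_pow_left₀ h1ν.le hdge 3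
      calc (1-ν)^5 = (1-ν)^2 * (1-ν)^3 := by ring
        _ ≤ (1-ν)^2 * (1-ν*t^2)^3 := mul_le_mul_of_nonneg_left h3 (sq_nonneg (1-ν))
    calc E x ≤ ((2*m*ν^2 + (m-ω)*ν) * (1-t^2)) / ((1-ν)^5) := by
          rw [hEx']
          exact div_le_div₀ (mul_nonneg (by linarith [mul_pos hmw hν0, mul_pos hm (mul_pos hν0 hν0)]) hs.le) hNle (by positivity) hdd
      _ = C0 * (1-t^2) := by rw [hC0def]; ring
  -- evenness
  have hψ1sym : ∀ x, ψ1 (-x) ^ 2 = ψ1 x ^ 2 := by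
    intro x; rw [hψ1, hψ1, mul_neg, Real.tanh_neg]; ring
  have hψ2sym : ∀ x, ψ2 (-x) = ψ2 x := by
    intro x; rw [hψ2, hψ2, mul_neg, Real.tanh_neg]; ring
  have hWsym : ∀ x, W (-x) = W x := by
    intro x; rw [hW, hW, hg, hg, mul_neg, Real.tanh_neg]; ring
  have hEsym : ∀ x, E (-x) = E x := by
    intro x; rw [hE, hE, hψ1sym, hψ2sym, hWsym]
  -- continuity
  have hden : ∀ x : ℝ, (1 - ν * Real.tanh (κ*x)^2) ≠ 0 := by
    intro x
    have h1 := tanh_sq_lt_one' (κ*x)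
    have h2 := sq_nonneg (Real.tanh (κ*x))
    have h3 : 0 < 1 - ν * Real.tanh (κ*x)^2 := by
      linarith [mul_le_of_le_one_right hν0.le h1.le]
    exact h3.ne'
  have hct : Continuous fun x : ℝ => Real.tanh (κ*x) :=
    continuous_tanh'.comp (continuous_const.mul continuous_id)
  have hcd : Continuous fun x : ℝ => 1 - ν * Real.tanh (κ*x)^2 :=
    continuous_const.sub (continuous_const.mul (hct.pow 2))
  have hcg : Continuous g := by
    rw [show g = fun x => (m - ω) * (1 - Real.tanh (κ * x) ^ 2) / (1 - ν * Real.tanh (κ * x) ^ 2)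
      from funext hg]
    exact (continuous_const.mul (continuous_const.sub (hct.pow 2))).div hcd hden
  have hcψ1 : Continuous ψ1 := by
    rw [show ψ1 = fun x => Real.sqrt ν * Real.tanh (κ * x) / (1 - ν * Real.tanh (κ * x) ^ 2)
      from funext hψ1]
    exact (continuous_const.mul hct).div hcd hden
  have hcψ2 : Continuous ψ2 := by
    rw [show ψ2 = fun x => -(ν / (1 - ν)) * (1 - Real.tanh (κ * x) ^ 2) /
        (1 - ν * Real.tanh (κ * x) ^ 2) from funext hψ2]
    exact (continuous_const.mul (continuous_const.sub (hct.pow 2))).div hcd hden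
  have hcE : Continuous E := by
    rw [show E = fun x => m * (ψ1 x ^ 2 + ψ2 x ^ 2) - W x * (ψ1 x ^ 2 - ψ2 x ^ 2)
      from funext hE, show W = fun x => m - g x from funext hW]
    exact (continuous_const.mul ((hcψ1.pow 2).add (hcψ2.pow 2))).sub
      ((continuous_const.sub hcg).mul ((hcψ1.pow 2).sub (hcψ2.pow 2)))
  refine ⟨fun x => ⟨(main x).1, (main x).2.1, (main x).2.2.1⟩, ?_, ⟨C0, fun x => ?_⟩⟩
  · apply hcE.locallyIntegrable.integrable_of_isBigO_atTop_of_norm_isNegInvariant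
      (g := fun x => Real.exp (-(2*κ)*x))
    · exact Filter.Eventually.of_forall fun x => by
        simp only [Function.comp_apply]; rw [hEsym x]
    · rw [Asymptotics.isBigO_iff]
      refine ⟨4*C0, Filter.Eventually.of_forall fun x => ?_⟩
      have h1 := sech_sq_le' (κ*x)
      obtain ⟨-, -, hpos, hbnd⟩ := main x
      rw [Real.norm_eq_abs, Real.norm_eq_abs, abs_of_pos hpos, abs_of_pos (Real.exp_pos _)]
      calc E x ≤ C0 * (1 - Real.tanh (κ*x)^2) := hbnd
        _ ≤ C0 * (4 * Real.exp (-(2*(κ*x)))) := mul_le_mul_of_nonneg_left h1 hC0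
        _ = 4*C0 * Real.exp (-(2*κ)*x) := by rw [show -(2*(κ*x)) = -(2*κ)*x by ring]; ring
    · exact ⟨Set.Ioi 0, Filter.Ioi_mem_atTop 0,
        exp_neg_integrableOn_Ioi 0 (by positivity)⟩
  · obtain ⟨-, -, hpos, hbnd⟩ := main x
    have ht1 : Real.tanh (κ*x)^2 < 1 := tanh_sq_lt_one' _
    have ht0 : 0 ≤ Real.tanh (κ*x)^2 := sq_nonneg _
    rw [abs_of_pos hpos]
    calc E x ≤ C0 * (1 - Real.tanh (κ*x)^2) := hbnd
      _ ≤ C0 * 1 := mul_le_mul_of_nonneg_left (by linarith) hC0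
      _ = C0 := mul_one C0
end

section
/- Let ψ_δ := √δ e^{-δ|·|} ψ^∞. Then, in the sense of distributions, A₁ψ_δ = (m - iδσ₂ sgn(x))ψ_δ, and consequently ⟨ψ_δ, A₁ψ_δ⟩_{L²} = m‖ψ_δ‖₂². -/
open Real MeasureTheory

lemma my_tanh_sq_lt_one (x : ℝ) : Real.tanh x ^ 2 < 1 := by
  have hc := Real.cosh_pos x
  have h := Real.cosh_sq_sub_sinh_sq x
  rw [Real.tanh_eq_sinh_div_cosh, div_pow, div_lt_one (by positivity)]
  nlinarith

lemma my_tanh_hasDerivAt (x : ℝ) : HasDerivAt Real.tanh (1 - Real.tanh x ^ 2) x := by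
  have hc := Real.cosh_pos x
  have h : HasDerivAt (fun y => Real.sinh y / Real.cosh y)
      ((Real.cosh x * Real.cosh x - Real.sinh x * Real.sinh x) / Real.cosh x ^ 2) x :=
    (Real.hasDerivAt_sinh x).div (Real.hasDerivAt_cosh x) hc.ne'
  have heq : (fun y => Real.sinh y / Real.cosh y) = Real.tanh := by
    funext y; rw [Real.tanh_eq_sinh_div_cosh]
  rw [heq] at h
  convert h using 1
  have h2 := Real.cosh_sq_sub_sinh_sq x
  rw [Real.tanh_eq_sinh_div_cosh]
  field_simp

theorem stmt9 (m ω κ ν δ : ℝ) (hm : 0 < m) (hω1 : 0 < ω) (hω2 : ω < m) (hδ : 0 < δ)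
    (hκ : κ = Real.sqrt (m ^ 2 - ω ^ 2)) (hν : ν = (m - ω) / (m + ω))
    (g ψ1 ψ2 η ψδ1 ψδ2 : ℝ → ℝ)
    (hg : ∀ x, g x = (m - ω) * (1 - Real.tanh (κ * x) ^ 2) / (1 - ν * Real.tanh (κ * x) ^ 2))
    (hψ1 : ∀ x, ψ1 x = Real.sqrt ν * Real.tanh (κ * x) / (1 - ν * Real.tanh (κ * x) ^ 2))
    (hψ2 : ∀ x, ψ2 x = -(ν / (1 - ν)) * (1 - Real.tanh (κ * x) ^ 2) / (1 - ν * Real.tanh (κ * x) ^ 2))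
    (hη : ∀ x, η x = Real.sqrt δ * Real.exp (-δ * |x|))
    (hψδ1 : ∀ x, ψδ1 x = η x * ψ1 x) (hψδ2 : ∀ x, ψδ2 x = η x * ψ2 x) :
    (∀ x, x ≠ 0 →
        HasDerivAt ψδ2 (m * ψδ1 x - δ * Real.sign x * ψδ2 x - (m - 2 * g x) * ψδ1 x) x ∧
        HasDerivAt ψδ1 (-(m + (m - 2 * g x)) * ψδ2 x - δ * Real.sign x * ψδ1 x) x) ∧
    (∫ x, (ψδ1 x * (m * ψδ1 x - δ * Real.sign x * ψδ2 x) +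
        ψδ2 x * (m * ψδ2 x + δ * Real.sign x * ψδ1 x))) =
      m * ∫ x, (ψδ1 x ^ 2 + ψδ2 x ^ 2) := by
  have hmω : 0 < m + ω := by linarith
  have hmω' : 0 < m - ω := by linarith
  have hν0 : 0 < ν := by rw [hν]; positivity
  have hν1 : ν < 1 := by rw [hν, div_lt_one hmω]; linarith
  have hsqν : Real.sqrt ν ^ 2 = ν := Real.sq_sqrt hν0.le
  have hκval : Real.sqrt ν * κ = m - ω := by
    rw [hκ, ← Real.sqrt_mul hν0.le]
    have h : ν * (m ^ 2 - ω ^ 2) = (m - ω) ^ 2 := by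
      rw [hν]; field_simp; ring
    rw [h, Real.sqrt_sq hmω'.le]
  have hνmω : ν * (m + ω) = m - ω := by rw [hν]; field_simp
  have hD : ∀ x : ℝ, 0 < 1 - ν * Real.tanh (κ * x) ^ 2 := by
    intro x
    have h1 := my_tanh_sq_lt_one (κ * x)
    nlinarith [sq_nonneg (Real.tanh (κ * x))]
  have hψ1fun : ψ1 = fun y => Real.sqrt ν * Real.tanh (κ * y) / (1 - ν * Real.tanh (κ * y) ^ 2) :=
    funext hψ1
  have hψ2fun : ψ2 = fun y => -(ν / (1 - ν)) * (1 - Real.tanh (κ * y) ^ 2) / (1 - ν * Real.tanh (κ * y) ^ 2) :=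
    funext hψ2
  have hψδ1fun : ψδ1 = fun y => η y * ψ1 y := funext hψδ1
  have hψδ2fun : ψδ2 = fun y => η y * ψ2 y := funext hψδ2
  -- derivative of tanh (κ ·)
  have hT : ∀ x : ℝ, HasDerivAt (fun y => Real.tanh (κ * y)) ((1 - Real.tanh (κ * x) ^ 2) * κ) x := by
    intro x
    have h1 : HasDerivAt (fun y : ℝ => κ * y) κ x := by
      simpa using (hasDerivAt_id x).const_mul κ
    exact (my_tanh_hasDerivAt (κ * x)).comp x h1
  -- derivative of η away from 0
  have hE : ∀ x : ℝ, x ≠ 0 → HasDerivAt η (-(δ * Real.sign x) * η x) x := by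
    intro x hx
    rcases hx.lt_or_gt with hneg | hpos
    · have hev : η =ᶠ[nhds x] fun y => Real.sqrt δ * Real.exp (-δ * (-y)) := by
        filter_upwards [Iio_mem_nhds hneg] with y hy
        rw [hη y, abs_of_neg hy]
      have hD1 : HasDerivAt (fun y : ℝ => Real.sqrt δ * Real.exp (-δ * (-y)))
          (Real.sqrt δ * (Real.exp (-δ * (-x)) * δ)) x := by
        have hlin : HasDerivAt (fun y : ℝ => -δ * (-y)) δ x := by
          have := ((hasDerivAt_id x).neg.const_mul (-δ))
          simpa using this
        exact (hlin.exp).const_mul (Real.sqrt δ)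
      have := hD1.congr_of_eventuallyEq hev
      refine this.congr_deriv ?_; symm
      rw [Real.sign_of_neg hneg, hη x, abs_of_neg hneg]
      ring
    · have hev : η =ᶠ[nhds x] fun y => Real.sqrt δ * Real.exp (-δ * y) := by
        filter_upwards [Ioi_mem_nhds hpos] with y hy
        rw [hη y, abs_of_pos hy]
      have hD1 : HasDerivAt (fun y : ℝ => Real.sqrt δ * Real.exp (-δ * y))
          (Real.sqrt δ * (Real.exp (-δ * x) * (-δ))) x := by
        have hlin : HasDerivAt (fun y : ℝ => -δ * y) (-δ) x := by
          simpa using (hasDerivAt_id x).const_mul (-δ)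
        exact (hlin.exp).const_mul (Real.sqrt δ)
      have := hD1.congr_of_eventuallyEq hev
      refine this.congr_deriv ?_; symm
      rw [Real.sign_of_pos hpos, hη x, abs_of_pos hpos]
      ring
  -- derivative of ψ2
  have H2 : ∀ x : ℝ, HasDerivAt ψ2 (2 * g x * ψ1 x) x := by
    intro x
    set t := Real.tanh (κ * x) with ht
    have hden : HasDerivAt (fun y => 1 - ν * Real.tanh (κ * y) ^ 2)
        (-(ν * ((2 : ℕ) * t ^ 1 * ((1 - t ^ 2) * κ)))) x :=
      (((hT x).pow 2).const_mul ν).const_sub 1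
    have hnum : HasDerivAt (fun y => -(ν / (1 - ν)) * (1 - Real.tanh (κ * y) ^ 2))
        (-(ν / (1 - ν)) * (-((2 : ℕ) * t ^ 1 * ((1 - t ^ 2) * κ)))) x :=
      (((hT x).pow 2).const_sub 1).const_mul _
    have H := hnum.div hden (hD x).ne'
    simp only [Pi.div_def] at H
    rw [← hψ2fun] at H
    refine H.congr_deriv ?_; symm
    rw [hg, hψ1, ← ht]
    have hd : 1 - t ^ 2 * ν ≠ 0 := by have := hD x; rw [← ht] at this; linarith
    have h1ν : (1 : ℝ) - ν ≠ 0 := by linarith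
    field_simp
    linear_combination (2*t*(1-t^2)*(1-ν)) * (κ * hsqν - Real.sqrt ν * hκval)
  -- derivative of ψ1
  have H1 : ∀ x : ℝ, HasDerivAt ψ1 (-(m + (m - 2 * g x)) * ψ2 x) x := by
    intro x
    set t := Real.tanh (κ * x) with ht
    have hden : HasDerivAt (fun y => 1 - ν * Real.tanh (κ * y) ^ 2)
        (-(ν * ((2 : ℕ) * t ^ 1 * ((1 - t ^ 2) * κ)))) x :=
      (((hT x).pow 2).const_mul ν).const_sub 1
    have hnum : HasDerivAt (fun y => Real.sqrt ν * Real.tanh (κ * y))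
        (Real.sqrt ν * ((1 - t ^ 2) * κ)) x := (hT x).const_mul _
    have H := hnum.div hden (hD x).ne'
    simp only [Pi.div_def] at H
    rw [← hψ1fun] at H
    refine H.congr_deriv ?_; symm
    rw [hg, hψ2, ← ht]
    have hd : 1 - t ^ 2 * ν ≠ 0 := by have := hD x; rw [← ht] at this; linarith
    have h1ν : (1 : ℝ) - ν ≠ 0 := by linarith
    field_simp
    linear_combination ((1-t^2)*(1-ν*t^2)) * hνmω - ((1-t^2)*(1-ν)*(1+t^2*ν)) * hκval
  constructor
  · intro x hx
    constructor
    · have H := (hE x hx).mul (H2 x)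
      simp only [Pi.mul_def] at H
      rw [← hψδ2fun] at H
      refine H.congr_deriv ?_; symm
      rw [hψδ1, hψδ2]
      ring
    · have H := (hE x hx).mul (H1 x)
      simp only [Pi.mul_def] at H
      rw [← hψδ1fun] at H
      refine H.congr_deriv ?_; symm
      rw [hψδ1, hψδ2]
      ring
  · have h : ∀ x : ℝ, ψδ1 x * (m * ψδ1 x - δ * Real.sign x * ψδ2 x) +
        ψδ2 x * (m * ψδ2 x + δ * Real.sign x * ψδ1 x) = m * (ψδ1 x ^ 2 + ψδ2 x ^ 2) := by
      intro x; ring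
    simp_rw [h]
    exact integral_const_mul m _
end
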